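/- Let P be an algebraically closed field, n ≥ 1, and A = P[x_1,…,x_n]. Let μ : A → A be a bijection generating an automorphism of End(A) with μ(x_i) = x_i for all i, and suppose in addition that μ fixes every constant: μ(a) = a for all a ∈ P. Then μ is P-homogeneous: μ(a·u) = a·μ(u) for every a ∈ P and every u ∈ A. -/
import Mathlib


/-- A bijection `μ` of P[x_1,…,x_n] generates an automorphism of the
endomorphism monoid if for every P-algebra endomorphism `s`, both
`μ ∘ s ∘ μ⁻¹` and `μ⁻¹ ∘ s ∘ μ` are P-algebra endomorphisms. -/
def GeneratesAut {P : Type*} [Field P] {n : ℕ}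
    (μ : MvPolynomial (Fin n) P ≃ MvPolynomial (Fin n) P) : Prop :=
  ∀ s : MvPolynomial (Fin n) P →ₐ[P] MvPolynomial (Fin n) P,
    (∃ t : MvPolynomial (Fin n) P →ₐ[P] MvPolynomial (Fin n) P,
      ⇑t = ⇑μ ∘ ⇑s ∘ ⇑μ.symm) ∧
    (∃ t : MvPolynomial (Fin n) P →ₐ[P] MvPolynomial (Fin n) P,
      ⇑t = ⇑μ.symm ∘ ⇑s ∘ ⇑μ)

theorem mu_eq_id {P : Type*} [Field P] [Infinite P]
    (n : ℕ)
    (μ : MvPolynomial (Fin n) P ≃ MvPolynomial (Fin n) P)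
    (hμ : GeneratesAut μ)
    (hX : ∀ i : Fin n, μ (MvPolynomial.X i) = MvPolynomial.X i)
    (hC : ∀ a : P, μ (MvPolynomial.C a) = MvPolynomial.C a) :
    ∀ v : MvPolynomial (Fin n) P, μ v = v := by
  intro v
  -- For each point b, the "evaluate at b" endomorphism commutes with μ.
  have key : ∀ b : Fin n → P, MvPolynomial.eval b (μ v) = MvPolynomial.eval b v := by
    intro b
    set c : MvPolynomial (Fin n) P →ₐ[P] MvPolynomial (Fin n) P :=
      (Algebra.ofId P (MvPolynomial (Fin n) P)).comp (MvPolynomial.aeval b) with hc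
    have hcv : ∀ w, c w = MvPolynomial.C (MvPolynomial.eval b w) := by
      intro w
      have : (MvPolynomial.aeval b : MvPolynomial (Fin n) P →ₐ[P] P) w
          = MvPolynomial.eval b w :=
        RingHom.congr_fun (MvPolynomial.coe_aeval_eq_eval (f := b)) w
      simp only [hc, AlgHom.comp_apply, Algebra.ofId_apply, MvPolynomial.algebraMap_eq, this]
    obtain ⟨⟨t, ht⟩, -⟩ := hμ c
    have hsymmX : ∀ i, μ.symm (MvPolynomial.X i) = MvPolynomial.X i := by
      intro i
      conv_lhs => rw [← hX i]
      exact μ.symm_apply_apply _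
    have htc : t = c := by
      apply MvPolynomial.algHom_ext
      intro i
      have : t (MvPolynomial.X i) = μ (c (μ.symm (MvPolynomial.X i))) := by
        rw [ht]; rfl
      rw [this, hsymmX, hcv, hC]

    have := congrFun ht (μ v)
    rw [htc] at this
    simp only [Function.comp_apply, μ.symm_apply_apply] at this
    rw [hcv, hcv, hC] at this
    exact MvPolynomial.C_injective _ _ this
  exact MvPolynomial.funext key

/-- identity (1) of the paper: If μ generates an automorphism of
End(P[X]), fixes all variables and fixes every constant, then μ is
P-homogeneous: μ(a·u) = a·μ(u). -/
theorem mu_homogeneous {P : Type*} [Field P] [IsAlgClosed P]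
    (n : ℕ) (hn : 1 ≤ n)
    (μ : MvPolynomial (Fin n) P ≃ MvPolynomial (Fin n) P)
    (hμ : GeneratesAut μ)
    (hX : ∀ i : Fin n, μ (MvPolynomial.X i) = MvPolynomial.X i)
    (hC : ∀ a : P, μ (MvPolynomial.C a) = MvPolynomial.C a) :
    ∀ (a : P) (u : MvPolynomial (Fin n) P),
      μ (MvPolynomial.C a * u) = MvPolynomial.C a * μ u := by
  intro a u
  rw [mu_eq_id n μ hμ hX hC, mu_eq_id n μ hμ hX hC]
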